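/- Let σ > 0, h_σ > 0, g > 0, and let n = (n_θ, n_φ) be a unit vector in ℝ². Define δ = √(n_θ²/σ² + n_φ²), ν = (n_θ/(σδ), n_φ/δ), the rotation matrix R_ν = [[1,0,0],[0,ν_θ,ν_φ],[0,−ν_φ,ν_θ]], the pressure terms T_θ^p(W) = (0, g h_σ/σ², 0)ᵀ, T_φ^p(W) = (0, 0, g h_σ/σ)ᵀ, T_n^p(W) = n_θ T_θ^p(W) + n_φ T_φ^p(W), and T^p(h) = (0, g h, 0)ᵀ. Then the rotational-invariance identity R_ν T_n^p(W) = δ T^p(h_σ/σ) holds. -/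

import Mathlib

/-- rotational-invariance identity `R_ν T_n^p(W) = δ T^p(h_σ/σ)`
for the pressure terms of the shallow water system on the sphere. -/
theorem rotational_invariance_pressure_term
    (σ hσ g nθ nφ : ℝ) (hσpos : 0 < σ) (hh : 0 < hσ) (hg : 0 < g)
    (hn : nθ ^ 2 + nφ ^ 2 = 1) :
    let δ : ℝ := Real.sqrt (nθ ^ 2 / σ ^ 2 + nφ ^ 2)
    let νθ : ℝ := nθ / (σ * δ)
    let νφ : ℝ := nφ / δ
    let Rν : Matrix (Fin 3) (Fin 3) ℝ := !![1, 0, 0; 0, νθ, νφ; 0, -νφ, νθ]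
    let Tθ : Fin 3 → ℝ := ![0, g * hσ / σ ^ 2, 0]
    let Tφ : Fin 3 → ℝ := ![0, 0, g * hσ / σ]
    let Tn : Fin 3 → ℝ := nθ • Tθ + nφ • Tφ
    let Tp : ℝ → Fin 3 → ℝ := fun h => ![0, g * h, 0]
    Rν.mulVec Tn = δ • Tp (hσ / σ) := by
  intro δ νθ νφ Rν Tθ Tφ Tn Tp
  have hσne : σ ≠ 0 := ne_of_gt hσpos
  have hpos : 0 < nθ ^ 2 / σ ^ 2 + nφ ^ 2 := by
    rcases eq_or_ne nθ 0 with h0 | h0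
    · have : nφ ^ 2 = 1 := by rw [h0] at hn; linarith
      positivity
    · have h1 : 0 < nθ ^ 2 / σ ^ 2 := by positivity
      nlinarith [sq_nonneg nφ]
  have hδpos : 0 < δ := Real.sqrt_pos.mpr hpos
  have hδne : δ ≠ 0 := ne_of_gt hδpos
  have hδsq : δ ^ 2 = nθ ^ 2 / σ ^ 2 + nφ ^ 2 := Real.sq_sqrt hpos.le
  have hδsq2 : δ ^ 2 * σ ^ 2 = nθ ^ 2 + nφ ^ 2 * σ ^ 2 := by
    rw [hδsq]; field_simp
  clear_value δ
  funext i
  fin_cases i <;>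
    simp [Rν, Tn, Tθ, Tφ, Tp, νθ, νφ, Matrix.mulVec, dotProduct,
      Fin.sum_univ_succ] <;>
    field_simp
  · linear_combination (-1) * hδsq2
  · ring
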